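/- Fix a positive rational q, and for each β ∈ (0,1) let Â₁(β,q) denote the unique A₁ ∈ (0, 1/(1+β)) with q·T₁(β,A₁) = T₂(β,A₁). Then (1 + √(1 − 4β·Â₁(β,q)²))/(2β·Â₁(β,q)) tends to +∞ as β tends to 0 from the right. (Consequently the inversion point ξ₊(β) > 0 of the ξ-motion, defined by cosh ξ₊ = (1 + √(1−4βÂ₁²))/(2βÂ₁), tends to +∞ as β → 0⁺, so for any fixed point ξ₀ there is β₀ > 0 such that |ξ₀| < ξ₊(β) for all β ∈ (0,β₀).) -/

import Mathlib

open Real Filter Topology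

/-- The complete elliptic integral of the first kind,
`K(κ) = ∫₀¹ dv / √((1 - v²)(1 - κ² v²))`. -/
noncomputable def K (κ : ℝ) : ℝ :=
  ∫ v in (0:ℝ)..1, 1 / Real.sqrt ((1 - v ^ 2) * (1 - κ ^ 2 * v ^ 2))

/-- The modulus `κ₁(β, A₁)`, defined by
`κ₁² = (A₁(1-β) + √(1-4βA₁²)) / (2√(1-4βA₁²))`. -/
noncomputable def κ₁ (β A₁ : ℝ) : ℝ :=
  Real.sqrt ((A₁ * (1 - β) + Real.sqrt (1 - 4 * β * A₁ ^ 2)) /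
    (2 * Real.sqrt (1 - 4 * β * A₁ ^ 2)))

/-- The modulus `κ₂(β)`, defined by `κ₂² = β/(1+β)`. -/
noncomputable def κ₂ (β : ℝ) : ℝ := Real.sqrt (β / (1 + β))

/-- The period `T₁(β,A₁) = 2√(2/a) (1-4βA₁²)^{-1/4} K(κ₁(β,A₁))` of the ξ-motion. -/
noncomputable def T₁ (a β A₁ : ℝ) : ℝ :=
  2 * Real.sqrt (2 / a) / (1 - 4 * β * A₁ ^ 2) ^ ((1:ℝ)/4) * K (κ₁ β A₁)

/-- The period `T₂(β,A₁) = 2/√(a A₁ (1+β)) · K(κ₂(β))` of the φ-motion. -/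
noncomputable def T₂ (a β A₁ : ℝ) : ℝ :=
  2 / Real.sqrt (a * A₁ * (1 + β)) * K (κ₂ β)

/-- For the implicit solution `Ahat₁(β,q)` of `q T₁ = T₂`, the quantity
`(1 + √(1 - 4β Ahat₁²)) / (2β Ahat₁)` (i.e. `cosh ξ₊`) tends to `+∞` as `β → 0⁺`. -/
theorem cosh_inversion_point_tendsto_atTop (a : ℝ) (ha : 0 < a) (q : ℚ) (hq : 0 < q)
    (Ahat : ℝ → ℝ)
    (hAhat : ∀ β ∈ Set.Ioo (0:ℝ) 1,
      Ahat β ∈ Set.Ioo 0 (1 / (1 + β)) ∧ (q : ℝ) * T₁ a β (Ahat β) = T₂ a β (Ahat β)) :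
    Tendsto (fun β => (1 + Real.sqrt (1 - 4 * β * Ahat β ^ 2)) / (2 * β * Ahat β))
      (𝓝[>] (0:ℝ)) atTop := by
  have h1 : Tendsto (fun β : ℝ => 1 / (2 * β)) (𝓝[>] (0:ℝ)) atTop := by
    have h2 : Tendsto (fun β : ℝ => 2 * β) (𝓝[>] (0:ℝ)) (𝓝[>] (0:ℝ)) := by
      apply tendsto_nhdsWithin_of_tendsto_nhds_of_eventually_within
      · have : Tendsto (fun β : ℝ => 2 * β) (𝓝 0) (𝓝 (2 * 0)) :=
          (tendsto_id.const_mul (2:ℝ))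
        simpa using this.mono_left nhdsWithin_le_nhds
      · filter_upwards [self_mem_nhdsWithin] with x hx
        exact mul_pos two_pos (Set.mem_Ioi.mp hx)
    have := tendsto_inv_nhdsGT_zero.comp h2
    simpa only [Function.comp_def, one_div] using this
  refine tendsto_atTop_mono' _ ?_ h1
  filter_upwards [Ioo_mem_nhdsGT_of_mem (by simp : (0:ℝ) ∈ Set.Ico (0:ℝ) 1)] with β hβ
  obtain ⟨⟨hA0, hA1⟩, -⟩ := hAhat β hβ
  have hβ0 : 0 < β := hβ.1
  have hb1 : (0:ℝ) < 1 + β := by linarith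
  have hAlt : Ahat β < 1 := lt_of_lt_of_le hA1 (by
    rw [div_le_one hb1]; linarith)
  have hden : 0 < 2 * β * Ahat β := by positivity
  have hle : 2 * β * Ahat β ≤ 2 * β := by nlinarith
  have hnum : (1:ℝ) ≤ 1 + Real.sqrt (1 - 4 * β * Ahat β ^ 2) := by
    have := Real.sqrt_nonneg (1 - 4 * β * Ahat β ^ 2); linarith
  exact div_le_div₀ (by linarith) hnum hden hle
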